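/- For all real x ≥ 10^6, Li(x) < x/log x + (6/5)·x/(log x)^2, where Li(x) = ∫₂ˣ dt/log t. -/

import Mathlib

noncomputable def Li (x : ℝ) : ℝ := ∫ t in (2:ℝ)..x, 1 / Real.log t

private lemma contOn1 : ContinuousOn (fun t : ℝ => 1 / Real.log t) (Set.Ici 2) := by
  apply ContinuousOn.div continuousOn_const
  · intro t ht
    simp only [Set.mem_Ici] at ht
    exact (Real.continuousAt_log (by linarith)).continuousWithinAt
  · intro t ht
    simp only [Set.mem_Ici] at ht
    exact ne_of_gt (Real.log_pos (by linarith))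

private lemma intOn (u v : ℝ) (hu : 2 ≤ u) (hv : 2 ≤ v) :
    IntervalIntegrable (fun t : ℝ => 1 / Real.log t) MeasureTheory.volume u v := by
  apply (contOn1.mono _).intervalIntegrable
  intro t ht
  exact le_trans (le_min hu hv) ht.1

private lemma convexOn1 : ConvexOn ℝ (Set.Ici (2:ℝ)) (fun t => 1 / Real.log t) := by
  refine ⟨convex_Ici 2, ?_⟩
  intro p hp q hq a b ha hb hab
  simp only [Set.mem_Ici] at hp hq
  simp only [smul_eq_mul]
  have hlp : 0 < Real.log p := Real.log_pos (by linarith)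
  have hlq : 0 < Real.log q := Real.log_pos (by linarith)
  have hmem : (0:ℝ) < a * p + b * q := by nlinarith
  have hlog_ge : a * Real.log p + b * Real.log q ≤ Real.log (a * p + b * q) := by
    have := (strictConcaveOn_log_Ioi.concaveOn).2 (Set.mem_Ioi.2 (by linarith : (0:ℝ) < p))
      (Set.mem_Ioi.2 (by linarith : (0:ℝ) < q)) ha hb hab
    simpa using this
  have h3 : a * Real.log p + b * Real.log p = Real.log p := by
    have h4 : (a + b) * Real.log p = Real.log p := by rw [hab, one_mul]
    linarith [h4]
  have h3' : a * Real.log q + b * Real.log q = Real.log q := by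
    have h4 : (a + b) * Real.log q = Real.log q := by rw [hab, one_mul]
    linarith [h4]
  have hpos : 0 < a * Real.log p + b * Real.log q := by
    rcases le_total (Real.log p) (Real.log q) with h|h
    · have := mul_le_mul_of_nonneg_left h hb
      linarith
    · have := mul_le_mul_of_nonneg_left h ha
      linarith
  have h1 : 1 / Real.log (a * p + b * q) ≤ 1 / (a * Real.log p + b * Real.log q) :=
    one_div_le_one_div_of_le hpos hlog_ge
  have h2 : 1 / (a * Real.log p + b * Real.log q) ≤ a * (1 / Real.log p) + b * (1 / Real.log q) := by
    rw [div_le_iff₀ hpos]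
    have he : (a * (1 / Real.log p) + b * (1 / Real.log q)) * (a * Real.log p + b * Real.log q)
        = 1 + a * b * (Real.log p - Real.log q) ^ 2 / (Real.log p * Real.log q) := by
      field_simp
      linear_combination Real.log p * Real.log q * (a + b + 1) * hab
    rw [he]
    have : 0 ≤ a * b * (Real.log p - Real.log q) ^ 2 / (Real.log p * Real.log q) := by positivity
    linarith
  exact le_trans h1 h2

private lemma trapBound {p q : ℝ} (hp : 2 ≤ p) (hpq : p < q) :
    ∫ t in p..q, 1 / Real.log t ≤ (q - p) * (1 / Real.log p + 1 / Real.log q) / 2 := by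
  have hq : (2:ℝ) ≤ q := by linarith
  have hqp : q - p ≠ 0 := by intro h; nlinarith
  have hlp : 0 < Real.log p := Real.log_pos (by linarith)
  have hlq : 0 < Real.log q := Real.log_pos (by linarith)
  set c1 := 1 / Real.log p with hc1
  set c2 := 1 / Real.log q with hc2
  set A := (q * c1 - p * c2) / (q - p) with hA
  set B := (c2 - c1) / (q - p) with hB
  have hchord : ∀ t ∈ Set.Icc p q, 1 / Real.log t ≤ A + t * B := by
    intro t ht
    have ha : 0 ≤ (q - t) / (q - p) := div_nonneg (by linarith [ht.2]) (by linarith)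
    have hb : 0 ≤ (t - p) / (q - p) := div_nonneg (by linarith [ht.1]) (by linarith)
    have hab : (q - t) / (q - p) + (t - p) / (q - p) = 1 := by
      field_simp
      ring
    have hxx : ((q - t) / (q - p)) * p + ((t - p) / (q - p)) * q = t := by
      rw [div_mul_eq_mul_div, div_mul_eq_mul_div, ← add_div, div_eq_iff hqp]; ring
    have hcomb := convexOn1.2 (Set.mem_Ici.2 hp) (Set.mem_Ici.2 hq) ha hb hab
    simp only [smul_eq_mul] at hcomb
    rw [hxx] at hcomb
    calc 1 / Real.log t ≤ (q - t) / (q - p) * (1 / Real.log p) + (t - p) / (q - p) * (1 / Real.log q) := hcomb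
      _ = A + t * B := by rw [hA, hB, hc1, hc2]; field_simp; ring
  have hfi : IntervalIntegrable (fun t : ℝ => 1 / Real.log t) MeasureTheory.volume p q :=
    intOn p q hp hq
  have hci : Continuous (fun t : ℝ => t * B) := by continuity
  have hgi : IntervalIntegrable (fun t : ℝ => A + t * B) MeasureTheory.volume p q :=
    (continuous_const.add hci).intervalIntegrable p q
  have hmon := intervalIntegral.integral_mono_on hpq.le hfi hgi hchord
  calc ∫ t in p..q, 1 / Real.log t ≤ ∫ t in p..q, (A + t * B) := hmon
    _ = A * (q - p) + (q ^ 2 - p ^ 2) / 2 * B := by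
        rw [intervalIntegral.integral_add intervalIntegrable_const (hci.intervalIntegrable p q),
          intervalIntegral.integral_const, intervalIntegral.integral_mul_const,
          integral_id]
        simp [smul_eq_mul]; ring
    _ = (q - p) * (c1 + c2) / 2 := by rw [hA, hB]; field_simp; ring

private lemma numericBound (b : ℝ) (h1 : 0.6931471803 < b) (h2 : b < 0.6931471808) :
    ((4:ℝ) - 2) * (1 / (1 * b) + 1 / (2 * b)) / 2 +
      ((8:ℝ) - 4) * (1 / (2 * b) + 1 / (3 * b)) / 2 +
      ((16:ℝ) - 8) * (1 / (3 * b) + 1 / (4 * b)) / 2 +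
      ((32:ℝ) - 16) * (1 / (4 * b) + 1 / (5 * b)) / 2 +
      ((64:ℝ) - 32) * (1 / (5 * b) + 1 / (6 * b)) / 2 +
      ((128:ℝ) - 64) * (1 / (6 * b) + 1 / (7 * b)) / 2 +
      ((256:ℝ) - 128) * (1 / (7 * b) + 1 / (8 * b)) / 2 +
      ((512:ℝ) - 256) * (1 / (8 * b) + 1 / (9 * b)) / 2 +
      ((1024:ℝ) - 512) * (1 / (9 * b) + 1 / (10 * b)) / 2 +
      ((2048:ℝ) - 1024) * (1 / (10 * b) + 1 / (11 * b)) / 2 +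
      ((4096:ℝ) - 2048) * (1 / (11 * b) + 1 / (12 * b)) / 2
      ≤ 4096 / (12 * b) + 4096 / (12 * b) ^ 2 + 2 * 4096 / (12 * b) ^ 3 + 6 * 4096 / (12 * b) ^ 4
        + 24 * 4096 / (12 * b) ^ 5 + 440 * 4096 / (12 * b) ^ 6 + 2 := by
  have hb0 : (0:ℝ) < b := by linarith
  have heL : ((4:ℝ) - 2) * (1 / (1 * b) + 1 / (2 * b)) / 2 +
      ((8:ℝ) - 4) * (1 / (2 * b) + 1 / (3 * b)) / 2 +
      ((16:ℝ) - 8) * (1 / (3 * b) + 1 / (4 * b)) / 2 +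
      ((32:ℝ) - 16) * (1 / (4 * b) + 1 / (5 * b)) / 2 +
      ((64:ℝ) - 32) * (1 / (5 * b) + 1 / (6 * b)) / 2 +
      ((128:ℝ) - 64) * (1 / (6 * b) + 1 / (7 * b)) / 2 +
      ((256:ℝ) - 128) * (1 / (7 * b) + 1 / (8 * b)) / 2 +
      ((512:ℝ) - 256) * (1 / (8 * b) + 1 / (9 * b)) / 2 +
      ((1024:ℝ) - 512) * (1 / (9 * b) + 1 / (10 * b)) / 2 +
      ((2048:ℝ) - 1024) * (1 / (10 * b) + 1 / (11 * b)) / 2 +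
      ((4096:ℝ) - 2048) * (1 / (11 * b) + 1 / (12 * b)) / 2
      = 309887 / 770 / b := by
    field_simp
    ring
  rw [heL]
  have hL1 : (309887 / 770 : ℝ) / b ≤ 309887 / 770 / 0.6931471803 := by gcongr <;> norm_num
  have e1 : (4096:ℝ) / (12 * 0.6931471808) ≤ 4096 / (12 * b) := by gcongr
  have e2 : (4096:ℝ) / (12 * 0.6931471808) ^ 2 ≤ 4096 / (12 * b) ^ 2 := by gcongr
  have e3 : (2 * 4096:ℝ) / (12 * 0.6931471808) ^ 3 ≤ 2 * 4096 / (12 * b) ^ 3 := by gcongr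
  have e4 : (6 * 4096:ℝ) / (12 * 0.6931471808) ^ 4 ≤ 6 * 4096 / (12 * b) ^ 4 := by gcongr
  have e5 : (24 * 4096:ℝ) / (12 * 0.6931471808) ^ 5 ≤ 24 * 4096 / (12 * b) ^ 5 := by gcongr
  have e6 : (440 * 4096:ℝ) / (12 * 0.6931471808) ^ 6 ≤ 440 * 4096 / (12 * b) ^ 6 := by gcongr
  have hfin : (309887 / 770 : ℝ) / 0.6931471803 ≤ 4096 / (12 * 0.6931471808)
      + 4096 / (12 * 0.6931471808) ^ 2 + 2 * 4096 / (12 * 0.6931471808) ^ 3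
      + 6 * 4096 / (12 * 0.6931471808) ^ 4 + 24 * 4096 / (12 * 0.6931471808) ^ 5
      + 440 * 4096 / (12 * 0.6931471808) ^ 6 + 2 := by norm_num
  linarith

set_option maxHeartbeats 1600000 in
theorem Li_upper_bound (x : ℝ) (hx : 10 ^ 6 ≤ x) :
    Li x < x / Real.log x + (6 / 5) * x / (Real.log x) ^ 2 := by
  have hx0 : (0:ℝ) < x := lt_of_lt_of_le (by norm_num) hx
  have hx4096 : (4096:ℝ) ≤ x := by linarith
  set L := Real.log x with hLdef
  -- bounds on exp and L
  have hexp138 : Real.exp 13.8 ≤ 10 ^ 6 := by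
    have h1 : Real.exp 1 < 2.7182818286 := Real.exp_one_lt_d9
    have h5 : (Real.exp 13.8) ^ 5 = Real.exp 69 := by
      rw [← Real.exp_nat_mul]; norm_num
    have h69 : Real.exp 69 = (Real.exp 1) ^ 69 := by
      rw [← Real.exp_nat_mul]; norm_num
    have hlt : (Real.exp 13.8) ^ 5 < (10 ^ 6 : ℝ) ^ 5 := by
      rw [h5, h69]
      calc (Real.exp 1) ^ 69 < 2.7182818286 ^ 69 := by
            apply pow_lt_pow_left₀ h1 (Real.exp_pos 1).le; norm_num
        _ < ((10:ℝ) ^ 6) ^ 5 := by norm_num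
    exact (lt_of_pow_lt_pow_left₀ 5 (by positivity) hlt).le
  have hexplo : (980000:ℝ) ≤ Real.exp 13.8 := by
    have h1 : (2.7182818283:ℝ) < Real.exp 1 := Real.exp_one_gt_d9
    have h5 : (Real.exp 13.8) ^ 5 = Real.exp 69 := by
      rw [← Real.exp_nat_mul]; norm_num
    have h69 : Real.exp 69 = (Real.exp 1) ^ 69 := by
      rw [← Real.exp_nat_mul]; norm_num
    have hle : ((980000:ℝ)) ^ 5 ≤ (Real.exp 13.8) ^ 5 := by
      rw [h5, h69]
      calc ((980000:ℝ)) ^ 5 ≤ 2.7182818283 ^ 69 := by norm_num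
        _ ≤ (Real.exp 1) ^ 69 := by
            apply pow_le_pow_left₀ (by norm_num) h1.le
    exact le_of_pow_le_pow_left₀ (by norm_num) (Real.exp_pos _).le hle
  have hL : (13.8 : ℝ) ≤ L := by
    rw [hLdef, Real.le_log_iff_exp_le hx0]
    exact le_trans hexp138 hx
  have hL0 : (0:ℝ) < L := by linarith
  -- log 2 bounds
  have hb1 : (0.6931471803:ℝ) < Real.log 2 := Real.log_two_gt_d9
  have hb2 : Real.log 2 < 0.6931471808 := Real.log_two_lt_d9
  have hb0 : (0:ℝ) < Real.log 2 := by linarith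
  have hlog4 : Real.log (4:ℝ) = 2 * Real.log 2 := by
    rw [show (4:ℝ) = 2 ^ 2 by norm_num, Real.log_pow]; norm_num
  have hlog8 : Real.log (8:ℝ) = 3 * Real.log 2 := by
    rw [show (8:ℝ) = 2 ^ 3 by norm_num, Real.log_pow]; norm_num
  have hlog16 : Real.log (16:ℝ) = 4 * Real.log 2 := by
    rw [show (16:ℝ) = 2 ^ 4 by norm_num, Real.log_pow]; norm_num
  have hlog32 : Real.log (32:ℝ) = 5 * Real.log 2 := by
    rw [show (32:ℝ) = 2 ^ 5 by norm_num, Real.log_pow]; norm_num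
  have hlog64 : Real.log (64:ℝ) = 6 * Real.log 2 := by
    rw [show (64:ℝ) = 2 ^ 6 by norm_num, Real.log_pow]; norm_num
  have hlog128 : Real.log (128:ℝ) = 7 * Real.log 2 := by
    rw [show (128:ℝ) = 2 ^ 7 by norm_num, Real.log_pow]; norm_num
  have hlog256 : Real.log (256:ℝ) = 8 * Real.log 2 := by
    rw [show (256:ℝ) = 2 ^ 8 by norm_num, Real.log_pow]; norm_num
  have hlog512 : Real.log (512:ℝ) = 9 * Real.log 2 := by
    rw [show (512:ℝ) = 2 ^ 9 by norm_num, Real.log_pow]; norm_num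
  have hlog1024 : Real.log (1024:ℝ) = 10 * Real.log 2 := by
    rw [show (1024:ℝ) = 2 ^ 10 by norm_num, Real.log_pow]; norm_num
  have hlog2048 : Real.log (2048:ℝ) = 11 * Real.log 2 := by
    rw [show (2048:ℝ) = 2 ^ 11 by norm_num, Real.log_pow]; norm_num
  have hlog4096 : Real.log (4096:ℝ) = 12 * Real.log 2 := by
    rw [show (4096:ℝ) = 2 ^ 12 by norm_num, Real.log_pow]; norm_num
  -- trapezoid bounds on [2, 4096]
  have hp1 : ∫ t in (2:ℝ)..4, 1 / Real.log t ≤ ((4:ℝ) - 2) * (1 / Real.log 2 + 1 / Real.log 4) / 2 := trapBound (by norm_num) (by norm_num)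
  have hp2 : ∫ t in (4:ℝ)..8, 1 / Real.log t ≤ ((8:ℝ) - 4) * (1 / Real.log 4 + 1 / Real.log 8) / 2 := trapBound (by norm_num) (by norm_num)
  have hp3 : ∫ t in (8:ℝ)..16, 1 / Real.log t ≤ ((16:ℝ) - 8) * (1 / Real.log 8 + 1 / Real.log 16) / 2 := trapBound (by norm_num) (by norm_num)
  have hp4 : ∫ t in (16:ℝ)..32, 1 / Real.log t ≤ ((32:ℝ) - 16) * (1 / Real.log 16 + 1 / Real.log 32) / 2 := trapBound (by norm_num) (by norm_num)
  have hp5 : ∫ t in (32:ℝ)..64, 1 / Real.log t ≤ ((64:ℝ) - 32) * (1 / Real.log 32 + 1 / Real.log 64) / 2 := trapBound (by norm_num) (by norm_num)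
  have hp6 : ∫ t in (64:ℝ)..128, 1 / Real.log t ≤ ((128:ℝ) - 64) * (1 / Real.log 64 + 1 / Real.log 128) / 2 := trapBound (by norm_num) (by norm_num)
  have hp7 : ∫ t in (128:ℝ)..256, 1 / Real.log t ≤ ((256:ℝ) - 128) * (1 / Real.log 128 + 1 / Real.log 256) / 2 := trapBound (by norm_num) (by norm_num)
  have hp8 : ∫ t in (256:ℝ)..512, 1 / Real.log t ≤ ((512:ℝ) - 256) * (1 / Real.log 256 + 1 / Real.log 512) / 2 := trapBound (by norm_num) (by norm_num)
  have hp9 : ∫ t in (512:ℝ)..1024, 1 / Real.log t ≤ ((1024:ℝ) - 512) * (1 / Real.log 512 + 1 / Real.log 1024) / 2 := trapBound (by norm_num) (by norm_num)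
  have hp10 : ∫ t in (1024:ℝ)..2048, 1 / Real.log t ≤ ((2048:ℝ) - 1024) * (1 / Real.log 1024 + 1 / Real.log 2048) / 2 := trapBound (by norm_num) (by norm_num)
  have hp11 : ∫ t in (2048:ℝ)..4096, 1 / Real.log t ≤ ((4096:ℝ) - 2048) * (1 / Real.log 2048 + 1 / Real.log 4096) / 2 := trapBound (by norm_num) (by norm_num)
  have he11 : ∫ t in (2:ℝ)..4096, 1 / Real.log t = (∫ t in (2:ℝ)..2048, 1 / Real.log t) + ∫ t in (2048:ℝ)..4096, 1 / Real.log t := (intervalIntegral.integral_add_adjacent_intervals (intOn 2 2048 (by norm_num) (by norm_num)) (intOn 2048 4096 (by norm_num) (by norm_num))).symm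
  have he10 : ∫ t in (2:ℝ)..2048, 1 / Real.log t = (∫ t in (2:ℝ)..1024, 1 / Real.log t) + ∫ t in (1024:ℝ)..2048, 1 / Real.log t := (intervalIntegral.integral_add_adjacent_intervals (intOn 2 1024 (by norm_num) (by norm_num)) (intOn 1024 2048 (by norm_num) (by norm_num))).symm
  have he9 : ∫ t in (2:ℝ)..1024, 1 / Real.log t = (∫ t in (2:ℝ)..512, 1 / Real.log t) + ∫ t in (512:ℝ)..1024, 1 / Real.log t := (intervalIntegral.integral_add_adjacent_intervals (intOn 2 512 (by norm_num) (by norm_num)) (intOn 512 1024 (by norm_num) (by norm_num))).symm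
  have he8 : ∫ t in (2:ℝ)..512, 1 / Real.log t = (∫ t in (2:ℝ)..256, 1 / Real.log t) + ∫ t in (256:ℝ)..512, 1 / Real.log t := (intervalIntegral.integral_add_adjacent_intervals (intOn 2 256 (by norm_num) (by norm_num)) (intOn 256 512 (by norm_num) (by norm_num))).symm
  have he7 : ∫ t in (2:ℝ)..256, 1 / Real.log t = (∫ t in (2:ℝ)..128, 1 / Real.log t) + ∫ t in (128:ℝ)..256, 1 / Real.log t := (intervalIntegral.integral_add_adjacent_intervals (intOn 2 128 (by norm_num) (by norm_num)) (intOn 128 256 (by norm_num) (by norm_num))).symm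
  have he6 : ∫ t in (2:ℝ)..128, 1 / Real.log t = (∫ t in (2:ℝ)..64, 1 / Real.log t) + ∫ t in (64:ℝ)..128, 1 / Real.log t := (intervalIntegral.integral_add_adjacent_intervals (intOn 2 64 (by norm_num) (by norm_num)) (intOn 64 128 (by norm_num) (by norm_num))).symm
  have he5 : ∫ t in (2:ℝ)..64, 1 / Real.log t = (∫ t in (2:ℝ)..32, 1 / Real.log t) + ∫ t in (32:ℝ)..64, 1 / Real.log t := (intervalIntegral.integral_add_adjacent_intervals (intOn 2 32 (by norm_num) (by norm_num)) (intOn 32 64 (by norm_num) (by norm_num))).symm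
  have he4 : ∫ t in (2:ℝ)..32, 1 / Real.log t = (∫ t in (2:ℝ)..16, 1 / Real.log t) + ∫ t in (16:ℝ)..32, 1 / Real.log t := (intervalIntegral.integral_add_adjacent_intervals (intOn 2 16 (by norm_num) (by norm_num)) (intOn 16 32 (by norm_num) (by norm_num))).symm
  have he3 : ∫ t in (2:ℝ)..16, 1 / Real.log t = (∫ t in (2:ℝ)..8, 1 / Real.log t) + ∫ t in (8:ℝ)..16, 1 / Real.log t := (intervalIntegral.integral_add_adjacent_intervals (intOn 2 8 (by norm_num) (by norm_num)) (intOn 8 16 (by norm_num) (by norm_num))).symm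
  have he2 : ∫ t in (2:ℝ)..8, 1 / Real.log t = (∫ t in (2:ℝ)..4, 1 / Real.log t) + ∫ t in (4:ℝ)..8, 1 / Real.log t := (intervalIntegral.integral_add_adjacent_intervals (intOn 2 4 (by norm_num) (by norm_num)) (intOn 4 8 (by norm_num) (by norm_num))).symm
  have hI1 : ∫ t in (2:ℝ)..4096, 1 / Real.log t ≤
      ((4:ℝ) - 2) * (1 / Real.log 2 + 1 / Real.log 4) / 2
      + ((8:ℝ) - 4) * (1 / Real.log 4 + 1 / Real.log 8) / 2
      + ((16:ℝ) - 8) * (1 / Real.log 8 + 1 / Real.log 16) / 2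
      + ((32:ℝ) - 16) * (1 / Real.log 16 + 1 / Real.log 32) / 2
      + ((64:ℝ) - 32) * (1 / Real.log 32 + 1 / Real.log 64) / 2
      + ((128:ℝ) - 64) * (1 / Real.log 64 + 1 / Real.log 128) / 2
      + ((256:ℝ) - 128) * (1 / Real.log 128 + 1 / Real.log 256) / 2
      + ((512:ℝ) - 256) * (1 / Real.log 256 + 1 / Real.log 512) / 2
      + ((1024:ℝ) - 512) * (1 / Real.log 512 + 1 / Real.log 1024) / 2
      + ((2048:ℝ) - 1024) * (1 / Real.log 1024 + 1 / Real.log 2048) / 2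
      + ((4096:ℝ) - 2048) * (1 / Real.log 2048 + 1 / Real.log 4096) / 2 := by
    linarith [hp1, hp2, hp3, hp4, hp5, hp6, hp7, hp8, hp9, hp10, hp11,
      he2, he3, he4, he5, he6, he7, he8, he9, he10, he11]
  have hI1' : ∫ t in (2:ℝ)..4096, 1 / Real.log t ≤
      4096 / (12 * Real.log 2) + 4096 / (12 * Real.log 2) ^ 2
      + 2 * 4096 / (12 * Real.log 2) ^ 3 + 6 * 4096 / (12 * Real.log 2) ^ 4
      + 24 * 4096 / (12 * Real.log 2) ^ 5 + 440 * 4096 / (12 * Real.log 2) ^ 6 + 2 := by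
    have := numericBound (Real.log 2) hb1 hb2
    rw [hlog4, hlog8, hlog16, hlog32, hlog64, hlog128, hlog256, hlog512,
      hlog1024, hlog2048, hlog4096] at hI1
    calc ∫ t in (2:ℝ)..4096, 1 / Real.log t ≤ _ := hI1
      _ ≤ _ := by
        convert this using 2 <;> ring
  -- the comparison function H on [4096, x]
  set H : ℝ → ℝ := fun t => t / Real.log t + t / (Real.log t) ^ 2 + 2 * t / (Real.log t) ^ 3
    + 6 * t / (Real.log t) ^ 4 + 24 * t / (Real.log t) ^ 5 + 440 * t / (Real.log t) ^ 6 with hH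
  set H' : ℝ → ℝ := fun t => 1 / Real.log t + 320 / (Real.log t) ^ 6 - 2640 / (Real.log t) ^ 7
    with hH'
  have hlogbig : ∀ t : ℝ, 4096 ≤ t → (8.3177661636:ℝ) ≤ Real.log t := by
    intro t ht
    have h1 : Real.log 4096 ≤ Real.log t := Real.log_le_log (by norm_num) ht
    rw [hlog4096] at h1
    linarith
  have hderiv : ∀ t ∈ Set.uIcc (4096:ℝ) x, HasDerivAt H (H' t) t := by
    intro t ht
    rw [Set.uIcc_of_le hx4096] at ht
    have ht4096 : (4096:ℝ) ≤ t := ht.1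
    have htpos : (0:ℝ) < t := by linarith
    have hlt : (0:ℝ) < Real.log t := by linarith [hlogbig t ht4096]
    have hne : Real.log t ≠ 0 := ne_of_gt hlt
    have hlog' : HasDerivAt Real.log (1 / t) t := by
      simpa [one_div] using Real.hasDerivAt_log (ne_of_gt htpos)
    have hP2 : HasDerivAt (fun y : ℝ => (Real.log y) ^ 2) (2 * (Real.log t) ^ 1 * (1 / t)) t := by
      simpa using hlog'.fun_pow 2
    have hP3 : HasDerivAt (fun y : ℝ => (Real.log y) ^ 3) (3 * (Real.log t) ^ 2 * (1 / t)) t := by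
      simpa using hlog'.fun_pow 3
    have hP4 : HasDerivAt (fun y : ℝ => (Real.log y) ^ 4) (4 * (Real.log t) ^ 3 * (1 / t)) t := by
      simpa using hlog'.fun_pow 4
    have hP5 : HasDerivAt (fun y : ℝ => (Real.log y) ^ 5) (5 * (Real.log t) ^ 4 * (1 / t)) t := by
      simpa using hlog'.fun_pow 5
    have hP6 : HasDerivAt (fun y : ℝ => (Real.log y) ^ 6) (6 * (Real.log t) ^ 5 * (1 / t)) t := by
      simpa using hlog'.fun_pow 6
    have hA := (hasDerivAt_id t).div hlog' hne
    have hB := (hasDerivAt_id t).div hP2 (pow_ne_zero 2 hne)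
    have hC := ((hasDerivAt_id t).const_mul (2:ℝ)).div hP3 (pow_ne_zero 3 hne)
    have hD := ((hasDerivAt_id t).const_mul (6:ℝ)).div hP4 (pow_ne_zero 4 hne)
    have hE := ((hasDerivAt_id t).const_mul (24:ℝ)).div hP5 (pow_ne_zero 5 hne)
    have hG := ((hasDerivAt_id t).const_mul (440:ℝ)).div hP6 (pow_ne_zero 6 hne)
    have hall := ((((hA.add hB).add hC).add hD).add hE).add hG
    rw [hH, hH']
    refine hall.congr_deriv ?_
    simp only [id_eq]
    field_simp
    ring
  have hclog : ContinuousOn Real.log (Set.Icc (4096:ℝ) x) := by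
    intro t ht
    exact (Real.continuousAt_log (ne_of_gt (lt_of_lt_of_le (by norm_num) ht.1))).continuousWithinAt
  have hlogne : ∀ t ∈ Set.Icc (4096:ℝ) x, Real.log t ≠ 0 := by
    intro t ht
    exact ne_of_gt (by linarith [hlogbig t ht.1])
  have hintH' : IntervalIntegrable H' MeasureTheory.volume 4096 x := by
    apply ContinuousOn.intervalIntegrable
    rw [Set.uIcc_of_le hx4096, hH']
    exact ((continuousOn_const.div hclog hlogne).add
      (continuousOn_const.div (hclog.pow 6) (fun t ht => pow_ne_zero 6 (hlogne t ht)))).sub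
      (continuousOn_const.div (hclog.pow 7) (fun t ht => pow_ne_zero 7 (hlogne t ht)))
  have hFTC : ∫ t in (4096:ℝ)..x, H' t = H x - H 4096 :=
    intervalIntegral.integral_eq_sub_of_hasDerivAt hderiv hintH'
  have hmono : (∫ t in (4096:ℝ)..x, 1 / Real.log t) ≤ ∫ t in (4096:ℝ)..x, H' t := by
    apply intervalIntegral.integral_mono_on hx4096 (intOn 4096 x (by norm_num) (by linarith))
      hintH'
    intro t ht
    have hlt : (8.3177661636:ℝ) ≤ Real.log t := hlogbig t ht.1
    have hl0 : (0:ℝ) < Real.log t := by linarith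
    rw [hH']
    simp only
    have h76 : 2640 / (Real.log t) ^ 7 ≤ 320 / (Real.log t) ^ 6 := by
      rw [div_le_div_iff₀ (by positivity) (by positivity)]
      have h7 : 320 * (Real.log t) ^ 7 = (320 * Real.log t) * (Real.log t) ^ 6 := by ring
      rw [h7]
      apply mul_le_mul_of_nonneg_right _ (by positivity)
      linarith
    linarith
  have hI2 : (∫ t in (4096:ℝ)..x, 1 / Real.log t) ≤ H x - H 4096 := by
    rw [← hFTC]; exact hmono
  -- split Li
  have hsplit : Li x = (∫ t in (2:ℝ)..4096, 1 / Real.log t)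
      + ∫ t in (4096:ℝ)..x, 1 / Real.log t := by
    rw [Li, ← intervalIntegral.integral_add_adjacent_intervals
      (intOn 2 4096 (by norm_num) (by norm_num)) (intOn 4096 x (by norm_num) (by linarith))]
  -- H 4096 in terms of log 2
  have hH4096 : H 4096 = 4096 / (12 * Real.log 2) + 4096 / (12 * Real.log 2) ^ 2
      + 2 * 4096 / (12 * Real.log 2) ^ 3 + 6 * 4096 / (12 * Real.log 2) ^ 4
      + 24 * 4096 / (12 * Real.log 2) ^ 5 + 440 * 4096 / (12 * Real.log 2) ^ 6 := by
    rw [hH]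
    simp only [hlog4096]
  -- main chain: Li x ≤ H x + 2
  have hmain : Li x ≤ H x + 2 := by
    rw [hsplit]
    have := hI1'
    rw [← hH4096] at this
    linarith
  -- final: 2 < x * ψ / L²
  have hψ : (23/10000 : ℝ) ≤ 1/5 - 2/L - 6/L^2 - 24/L^3 - 440/L^4 := by
    have e1 : (2:ℝ)/L ≤ 2/13.8 := by gcongr <;> norm_num
    have e2 : (6:ℝ)/L^2 ≤ 6/13.8^2 := by gcongr <;> norm_num
    have e3 : (24:ℝ)/L^3 ≤ 24/13.8^3 := by gcongr <;> norm_num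
    have e4 : (440:ℝ)/L^4 ≤ 440/13.8^4 := by gcongr <;> norm_num
    have : (23/10000 : ℝ) ≤ 1/5 - 2/13.8 - 6/13.8^2 - 24/13.8^3 - 440/13.8^4 := by norm_num
    linarith
  have hxL : (5145:ℝ) ≤ x / L^2 := by
    have hxeq : x = Real.exp L := (Real.exp_log hx0).symm
    have hu : (0:ℝ) ≤ L - 13.8 := by linarith
    have he1 : (L - 13.8)/2 + 1 ≤ Real.exp ((L - 13.8)/2) := Real.add_one_le_exp _
    have he2 : Real.exp (L - 13.8) = Real.exp ((L - 13.8)/2) ^ 2 := by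
      rw [sq, ← Real.exp_add]; ring_nf
    have he3 : (L/13.8)^2 ≤ Real.exp (L - 13.8) := by
      rw [he2]
      have h4 : (0:ℝ) ≤ L/13.8 := by positivity
      have h5 : L/13.8 ≤ (L - 13.8)/2 + 1 := by
        rw [div_le_iff₀ (by norm_num : (0:ℝ) < 13.8)]
        linarith
      calc (L/13.8)^2 ≤ ((L - 13.8)/2 + 1)^2 := by
            apply pow_le_pow_left₀ h4 h5
        _ ≤ Real.exp ((L - 13.8)/2) ^ 2 := by
            apply pow_le_pow_left₀ (by linarith) he1
    have he4 : x = Real.exp 13.8 * Real.exp (L - 13.8) := by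
      rw [hxeq, ← Real.exp_add]; ring_nf
    have he5 : 980000 * (L/13.8)^2 ≤ x := by
      rw [he4]
      exact mul_le_mul hexplo he3 (by positivity) (Real.exp_pos _).le
    rw [le_div_iff₀ (by positivity : (0:ℝ) < L^2)]
    ring_nf at he5 ⊢
    linarith [sq_nonneg L]
  have hbig : (2:ℝ) < x / L^2 * (1/5 - 2/L - 6/L^2 - 24/L^3 - 440/L^4) := by
    calc (2:ℝ) < (5145:ℝ) * (23/10000) := by norm_num
      _ ≤ x / L^2 * (1/5 - 2/L - 6/L^2 - 24/L^3 - 440/L^4) := by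
          apply mul_le_mul hxL hψ (by norm_num) (le_trans (by norm_num) hxL)
  have hident : H x + x / L^2 * (1/5 - 2/L - 6/L^2 - 24/L^3 - 440/L^4)
      = x / L + 6/5 * x / L^2 := by
    rw [hH]
    simp only [← hLdef]
    field_simp
    ring
  calc Li x ≤ H x + 2 := hmain
    _ < H x + x / L^2 * (1/5 - 2/L - 6/L^2 - 24/L^3 - 440/L^4) := by linarith
    _ = x / L + 6/5 * x / L^2 := hident
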